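/- Let Γ be a finite abelian group and τ : Γ × Γ → ℂˣ a normalized 2-cocycle that is symmetric, i.e., τ(s,t) = τ(t,s) for all s, t ∈ Γ. Then τ is a coboundary: there exists ν : Γ → ℂˣ with ν(1) = 1 such that τ(s,t) = ν(s)ν(t)ν(st)⁻¹ for all s, t. -/

import Mathlib

noncomputable def stmt4Root (x : ℂˣ) (n : ℤ) : ℂˣ :=
  if n = 0 then 1 else Units.mk0 (Complex.exp (Complex.log x / n)) (Complex.exp_ne_zero _)

lemma stmt4Root_cancel (x : ℂˣ) {n : ℤ} (hn : n ≠ 0) : stmt4Root x n ^ n = x := by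
  have hn' : (n : ℂ) ≠ 0 := Int.cast_ne_zero.mpr hn
  ext
  rw [stmt4Root, if_neg hn, Units.val_zpow_eq_zpow_val, Units.val_mk0,
    ← Complex.exp_int_mul, mul_div_cancel₀ _ hn', Complex.exp_log x.ne_zero]

noncomputable instance : DivisibleBy (Additive ℂˣ) ℤ where
  div a n := Additive.ofMul (stmt4Root a.toMul n)
  div_zero a := by simp [stmt4Root]
  div_cancel {n} a hn := by rw [← ofMul_zpow, stmt4Root_cancel _ hn]; rfl

structure CExt (Γ : Type*) where
  g : Γ
  a : ℂˣ

theorem stmt_4 (Γ : Type*) [CommGroup Γ] [Fintype Γ] (τ : Γ → Γ → ℂˣ)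
    (hcoc : ∀ s t u : Γ, τ s t * τ (s * t) u = τ t u * τ s (t * u))
    (hnorm₁ : ∀ s : Γ, τ 1 s = 1) (hnorm₂ : ∀ s : Γ, τ s 1 = 1)
    (hsym : ∀ s t : Γ, τ s t = τ t s) :
    ∃ ν : Γ → ℂˣ, ν 1 = 1 ∧ ∀ s t : Γ, τ s t = ν s * ν t * (ν (s * t))⁻¹ := by
  letI : Mul (CExt Γ) := ⟨fun x y => ⟨x.g * y.g, x.a * y.a * τ x.g y.g⟩⟩
  letI : One (CExt Γ) := ⟨⟨1, 1⟩⟩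
  letI : Inv (CExt Γ) := ⟨fun x => ⟨x.g⁻¹, x.a⁻¹ * (τ x.g x.g⁻¹)⁻¹⟩⟩
  have hmul : ∀ x y : CExt Γ, x * y = ⟨x.g * y.g, x.a * y.a * τ x.g y.g⟩ := fun _ _ => rfl
  have hone : (1 : CExt Γ) = ⟨1, 1⟩ := rfl
  have hinv : ∀ x : CExt Γ, x⁻¹ = ⟨x.g⁻¹, x.a⁻¹ * (τ x.g x.g⁻¹)⁻¹⟩ := fun _ => rfl
  letI : CommGroup (CExt Γ) :=
    { mul_assoc := by
        rintro ⟨s, a⟩ ⟨t, b⟩ ⟨u, c⟩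
        simp only [hmul]
        refine congrArg₂ CExt.mk (mul_assoc ..) ?_
        rw [mul_right_comm (a * b) (τ s t) c, mul_assoc (a * b * c), hcoc s t u,
          mul_assoc a b c]
        simp [mul_assoc]
      one_mul := by
        rintro ⟨s, a⟩
        rw [hmul, hone]
        exact congrArg₂ CExt.mk (one_mul s) (by dsimp only; rw [hnorm₁, mul_one, one_mul])
      mul_one := by
        rintro ⟨s, a⟩
        rw [hmul, hone]
        exact congrArg₂ CExt.mk (mul_one s) (by dsimp only; rw [hnorm₂, mul_one, mul_one])
      inv_mul_cancel := by
        rintro ⟨s, a⟩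
        rw [hinv, hmul, hone]
        refine congrArg₂ CExt.mk (inv_mul_cancel s) ?_
        dsimp only
        rw [hsym s⁻¹ s, mul_right_comm a⁻¹, inv_mul_cancel, one_mul, inv_mul_cancel]
      mul_comm := by
        rintro ⟨s, a⟩ ⟨t, b⟩
        simp only [hmul]
        exact congrArg₂ CExt.mk (mul_comm s t)
          (by rw [mul_comm a b, hsym s t]) }
  let j : ℂˣ →* CExt Γ :=
    { toFun := fun a => ⟨1, a⟩
      map_one' := rfl
      map_mul' := fun a b => by
        show (⟨1, a * b⟩ : CExt Γ) = ⟨1, a⟩ * ⟨1, b⟩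
        rw [hmul]
        dsimp only
        simp [hnorm₁] }
  obtain ⟨r, hr⟩ := (Module.Baer.of_divisible (Additive ℂˣ)).extension_property_addMonoidHom
    (MonoidHom.toAdditive j)
    (fun a b h => by
      have h2 : (⟨1, a⟩ : CExt Γ) = ⟨1, b⟩ := h
      exact congrArg Additive.ofMul (congrArg CExt.a h2))
    (AddMonoidHom.id (Additive ℂˣ))
  have hrj : ∀ a : ℂˣ, (r (Additive.ofMul (⟨1, a⟩ : CExt Γ))).toMul = a := fun a =>
    congrArg Additive.toMul (DFunLike.congr_fun hr (Additive.ofMul a))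
  refine ⟨fun s => (r (Additive.ofMul (⟨s, 1⟩ : CExt Γ))).toMul, ?_, fun s t => ?_⟩
  · show (r (Additive.ofMul (⟨1, 1⟩ : CExt Γ))).toMul = 1
    rw [← hone, ofMul_one, map_zero]
    rfl
  · have key : (⟨s, 1⟩ : CExt Γ) * ⟨t, 1⟩ = (⟨s * t, 1⟩ : CExt Γ) * ⟨1, τ s t⟩ := by
      simp only [hmul]
      refine congrArg₂ CExt.mk (mul_one (s * t)).symm ?_
      simp [hnorm₂]
    have h3 := congrArg (fun x : CExt Γ => (r (Additive.ofMul x)).toMul) key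
    simp only [ofMul_mul, map_add, toMul_add, hrj] at h3
    rw [h3, mul_comm _ (τ s t), mul_assoc, mul_inv_cancel, mul_one]
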